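/- Let n ≥ 3 and let f = (f_0, …, f_n) be given by f_k = a_0^{n−k} b_0^k + a_1^{n−k} b_1^k, where v_0 = (a_0, b_0) and v_1 = (a_1, b_1) are linearly independent vectors in ℂ². Then f ∈ 𝒜₁ if and only if a_0 a_1 + b_0 b_1 = 0 (i.e., θ(f) = 0) and there exist r ∈ {0,1,2,3} and t ∈ {0,1} such that either (a_1^n = α^{tn+2r}·b_0^n and b_0 ≠ 0) or (b_1^n = α^{tn+2r}·a_0^n and a_0 ≠ 0). -/

import Mathlib

/-- `α = (1 + i)/√2`, a primitive 8th root of unity with `α² = i`. -/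
noncomputable def alpha : ℂ := (1 + Complex.I) / (Real.sqrt 2 : ℂ)

/-- `f ∈ 𝒜₁`: there exist `H ∈ O₂(ℂ)`, a nonzero `c ∈ ℂ`, `t ∈ {0,1}`, and
`r ∈ {0,1,2,3}` such that `f = c ((H(1,1))^{⊗n} + α^{tn+2r} (H(1,-1))^{⊗n})`. -/
def MemA1 (n : ℕ) (f : ℕ → ℂ) : Prop :=
  ∃ (H : Matrix (Fin 2) (Fin 2) ℂ) (c : ℂ) (t r : ℕ),
    H.transpose * H = 1 ∧ c ≠ 0 ∧ t ≤ 1 ∧ r ≤ 3 ∧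
    ∀ k ≤ n, f k =
      c * (H.mulVec ![1, 1] 0 ^ (n - k) * H.mulVec ![1, 1] 1 ^ k +
        alpha ^ (t * n + 2 * r) *
          (H.mulVec ![1, -1] 0 ^ (n - k) * H.mulVec ![1, -1] 1 ^ k))

lemma alpha_sq : alpha ^ 2 = Complex.I := by
  have h2 : ((Real.sqrt 2 : ℝ) : ℂ) ^ 2 = 2 := by
    rw [← Complex.ofReal_pow]
    norm_cast
    rw [Real.sq_sqrt] <;> norm_num
  have hne : ((Real.sqrt 2 : ℝ) : ℂ) ≠ 0 := by
    intro h
    rw [h] at h2; simp at h2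
  have h3 : (1 + Complex.I) ^ 2 = 2 * Complex.I := by
    rw [add_sq, Complex.I_sq]; ring
  rw [alpha, div_pow, h2, h3]
  norm_num

lemma alpha_pow_four : alpha ^ 4 = -1 := by
  have : alpha ^ 4 = (alpha ^ 2) ^ 2 := by ring
  rw [this, alpha_sq, Complex.I_sq]

lemma alpha_pow_eight : alpha ^ 8 = 1 := by
  have : alpha ^ 8 = (alpha ^ 4) ^ 2 := by ring
  rw [this, alpha_pow_four]; ring

lemma alpha_ne_zero : alpha ≠ 0 := by
  intro h
  have := alpha_sq
  rw [h] at this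
  simp at this
  exact Complex.I_ne_zero this.symm

lemma alpha_pow_mod (m : ℕ) : alpha ^ m = alpha ^ (m % 8) := by
  conv_lhs => rw [← Nat.div_add_mod m 8]
  rw [pow_add, pow_mul, alpha_pow_eight, one_pow, one_mul]

def Aset (n : ℕ) (x : ℂ) : Prop := ∃ t r : ℕ, t ≤ 1 ∧ r ≤ 3 ∧ x = alpha ^ (t * n + 2 * r)

lemma Aset_base (n t r : ℕ) (ht : t ≤ 1) (hr : r ≤ 3) : Aset n (alpha ^ (t * n + 2 * r)) :=
  ⟨t, r, ht, hr, rfl⟩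

lemma Aset_neg {n : ℕ} {x : ℂ} (h : Aset n x) : Aset n (-x) := by
  obtain ⟨t, r, ht, hr, rfl⟩ := h
  refine ⟨t, (r + 2) % 4, ht, by omega, ?_⟩
  have hm : (t * n + 2 * ((r + 2) % 4)) % 8 = ((t * n + 2 * r) + 4) % 8 := by
    generalize t * n = m; omega
  symm
  calc alpha ^ (t * n + 2 * ((r + 2) % 4)) = alpha ^ ((t * n + 2 * r) + 4) := by
        rw [alpha_pow_mod (t * n + 2 * ((r + 2) % 4)), hm, ← alpha_pow_mod]
    _ = alpha ^ (t * n + 2 * r) * alpha ^ 4 := pow_add _ _ _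
    _ = -(alpha ^ (t * n + 2 * r)) := by rw [alpha_pow_four]; ring

lemma Aset_inv {n : ℕ} {x : ℂ} (h : Aset n x) : ∃ y, Aset n y ∧ y * x = 1 := by
  obtain ⟨t, r, ht, hr, rfl⟩ := h
  refine ⟨alpha ^ (t * n + 2 * ((4 - (t * n + r) % 4) % 4)), ⟨t, _, ht, by omega, rfl⟩, ?_⟩
  rw [← pow_add]
  have hm : (t * n + 2 * ((4 - (t * n + r) % 4) % 4) + (t * n + 2 * r)) % 8 = 0 := by
    generalize t * n = m; omega
  rw [alpha_pow_mod, hm, pow_zero]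




lemma pow_indep {m n : ℕ} (hmn : m ≤ n + 1) (x y c : Fin m → ℂ)
    (hnz : ∀ i, x i ≠ 0 ∨ y i ≠ 0)
    (hpair : ∀ i j, i ≠ j → x i * y j ≠ x j * y i)
    (h : ∀ k ≤ n, ∑ i, c i * (x i ^ (n - k) * y i ^ k) = 0) :
    ∀ i, c i = 0 := by
  obtain ⟨l, hl⟩ := Infinite.exists_notMem_finset
    (Finset.univ.image fun i => -(x i / y i))
  have hX : ∀ i, x i + l * y i ≠ 0 := by
    intro i hi
    by_cases hy : y i = 0
    · rcases hnz i with hx | hy'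
      · rw [hy, mul_zero, add_zero] at hi; exact hx hi
      · exact hy' hy
    · apply hl
      rw [Finset.mem_image]
      refine ⟨i, Finset.mem_univ i, ?_⟩
      field_simp
      linear_combination -hi
  set X : Fin m → ℂ := fun i => x i + l * y i with hXdef
  have h' : ∀ k ≤ n, ∑ i, c i * (X i ^ (n - k) * y i ^ k) = 0 := by
    intro k hk
    have expand : ∀ i : Fin m, c i * (X i ^ (n - k) * y i ^ k) =
        ∑ j ∈ Finset.range (n - k + 1),
          (((n - k).choose j : ℂ) * l ^ (n - k - j)) *
            (c i * (x i ^ (n - (n - j)) * y i ^ (n - j))) := by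
      intro i
      rw [hXdef]
      simp only
      rw [add_pow, Finset.sum_mul, Finset.mul_sum]
      refine Finset.sum_congr rfl fun j hj => ?_
      have hj' : j ≤ n - k := Nat.lt_succ_iff.mp (Finset.mem_range.mp hj)
      have h1 : n - (n - j) = j := by omega
      have h2 : n - j = (n - k - j) + k := by omega
      rw [h1, h2, pow_add, mul_pow]
      ring
    calc ∑ i, c i * (X i ^ (n - k) * y i ^ k)
        = ∑ i, ∑ j ∈ Finset.range (n - k + 1),
            (((n - k).choose j : ℂ) * l ^ (n - k - j)) *
              (c i * (x i ^ (n - (n - j)) * y i ^ (n - j))) :=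
          Finset.sum_congr rfl fun i _ => expand i
      _ = ∑ j ∈ Finset.range (n - k + 1),
            (((n - k).choose j : ℂ) * l ^ (n - k - j)) *
              ∑ i, c i * (x i ^ (n - (n - j)) * y i ^ (n - j)) := by
          rw [Finset.sum_comm]
          exact Finset.sum_congr rfl fun j _ => (Finset.mul_sum _ _ _).symm
      _ = 0 := by
          apply Finset.sum_eq_zero
          intro j hj
          rw [h (n - j) (by omega), mul_zero]
  set t : Fin m → ℂ := fun i => y i / X i with htdef
  have htinj : Function.Injective t := by
    intro i j hij
    by_contra hne
    apply hpair i j hne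
    have h1 : y i * X j = y j * X i := (div_eq_div_iff (hX i) (hX j)).mp hij
    simp only [hXdef] at h1
    linear_combination -h1
  set d : Fin m → ℂ := fun i => c i * X i ^ n with hddef
  have key : ∀ k : Fin m, ∑ i, d i * t i ^ (k : ℕ) = 0 := by
    intro k
    have hk : (k : ℕ) ≤ n := by have := k.isLt; omega
    have : ∀ i, d i * t i ^ (k : ℕ) = c i * (X i ^ (n - (k : ℕ)) * y i ^ (k : ℕ)) := by
      intro i
      have hXn : X i ^ n = X i ^ (n - (k : ℕ)) * X i ^ (k : ℕ) := by
        rw [← pow_add]; congr 1; omega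
      have hXk : X i ^ (k : ℕ) ≠ 0 := pow_ne_zero _ (hX i)
      simp only [hddef, htdef, div_pow]
      rw [← mul_div_assoc, div_eq_iff hXk, hXn]
      ring
    rw [Finset.sum_congr rfl fun i _ => this i]
    exact h' _ hk
  have hd0 : ∀ i, d i = 0 := by
    have hdet : (Matrix.vandermonde t).det ≠ 0 := by
      rw [Matrix.det_vandermonde]
      apply Finset.prod_ne_zero_iff.mpr
      intro i _
      apply Finset.prod_ne_zero_iff.mpr
      intro j hj
      exact sub_ne_zero.mpr fun hh => (Finset.mem_Ioi.mp hj).ne' (htinj hh)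
    have hunit : IsUnit ((Matrix.vandermonde t).transpose) := by
      rw [Matrix.isUnit_iff_isUnit_det, Matrix.det_transpose]
      exact (isUnit_iff_ne_zero).mpr hdet
    have hinj := Matrix.mulVec_injective_iff_isUnit.mpr hunit
    have hmv : (Matrix.vandermonde t).transpose.mulVec d = 0 := by
      funext k
      simp only [Matrix.mulVec, dotProduct, Matrix.transpose_apply, Matrix.vandermonde,
        Matrix.of_apply, Pi.zero_apply]
      rw [← key k]
      exact Finset.sum_congr rfl fun i _ => by ring
    have := hinj (a₂ := 0) (by rw [hmv, Matrix.mulVec_zero])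
    intro i
    exact congrFun this i
  intro i
  have := hd0 i
  simp only [hddef] at this
  rcases mul_eq_zero.mp this with h1 | h1
  · exact h1
  · exact absurd h1 (pow_ne_zero _ (hX i))

lemma scale_pow (n k : ℕ) (hk : k ≤ n) (μ x y : ℂ) :
    (μ * x) ^ (n - k) * (μ * y) ^ k = μ ^ n * (x ^ (n - k) * y ^ k) := by
  calc (μ * x) ^ (n - k) * (μ * y) ^ k
      = (μ ^ (n - k) * μ ^ k) * (x ^ (n - k) * y ^ k) := by rw [mul_pow, mul_pow]; ring
    _ = μ ^ n * (x ^ (n - k) * y ^ k) := by rw [← pow_add, Nat.sub_add_cancel hk]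

lemma colinear (x y x' y' : ℂ) (h : x * y' = x' * y) (hnz : ¬(x' = 0 ∧ y' = 0)) :
    ∃ μ, x = μ * x' ∧ y = μ * y' := by
  by_cases hx' : x' = 0
  · have hy' : y' ≠ 0 := fun h' => hnz ⟨hx', h'⟩
    have hx : x = 0 := by
      have h2 : x * y' = 0 := by rw [h, hx', zero_mul]
      exact (mul_eq_zero.mp h2).resolve_right hy'
    exact ⟨y / y', by simp [hx, hx'], by field_simp⟩
  · refine ⟨x / x', by field_simp, ?_⟩
    field_simp
    linear_combination -h

lemma pow_indep2 (n : ℕ) (hn : 1 ≤ n) (x₀ y₀ x₁ y₁ c₀ c₁ : ℂ)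
    (h01 : x₀ * y₁ ≠ x₁ * y₀)
    (h : ∀ k ≤ n, c₀ * (x₀ ^ (n - k) * y₀ ^ k) + c₁ * (x₁ ^ (n - k) * y₁ ^ k) = 0) :
    c₀ = 0 ∧ c₁ = 0 := by
  have key := pow_indep (m := 2) (n := n) (by omega) ![x₀, x₁] ![y₀, y₁] ![c₀, c₁]
    (by
      intro i
      fin_cases i <;> simp only [Matrix.cons_val_zero, Matrix.cons_val_one, Matrix.head_cons]
      · by_cases hx : x₀ = 0
        · right; intro hy; simp at hy; exact h01 (by rw [hx, hy]; ring)
        · left; exact hx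
      · by_cases hx : x₁ = 0
        · right; intro hy; simp at hy; exact h01 (by rw [hx, hy]; ring)
        · left; exact hx)
    (by
      intro i j hij
      fin_cases i <;> fin_cases j <;>
        simp only [Matrix.cons_val_zero, Matrix.cons_val_one, Matrix.head_cons] <;>
        first
          | exact absurd rfl hij
          | exact h01
          | exact fun hh => h01 hh.symm)
    (by
      intro k hk
      rw [Fin.sum_univ_two]
      simpa using h k hk)
  exact ⟨key 0, key 1⟩

lemma pow_indep3 (n : ℕ) (hn : 2 ≤ n) (x₀ y₀ x₁ y₁ x₂ y₂ c₀ c₁ c₂ : ℂ)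
    (h01 : x₀ * y₁ ≠ x₁ * y₀) (h02 : x₀ * y₂ ≠ x₂ * y₀) (h12 : x₁ * y₂ ≠ x₂ * y₁)
    (h : ∀ k ≤ n, c₀ * (x₀ ^ (n - k) * y₀ ^ k) + c₁ * (x₁ ^ (n - k) * y₁ ^ k)
      + c₂ * (x₂ ^ (n - k) * y₂ ^ k) = 0) :
    c₀ = 0 ∧ c₁ = 0 ∧ c₂ = 0 := by
  have key := pow_indep (m := 3) (n := n) (by omega) ![x₀, x₁, x₂] ![y₀, y₁, y₂] ![c₀, c₁, c₂]
    (by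
      intro i
      fin_cases i <;>
        simp only [Matrix.cons_val_zero, Matrix.cons_val_one, Matrix.head_cons,
          Matrix.cons_val_two, Matrix.tail_cons]
      · by_cases hx : x₀ = 0
        · right; intro hy; simp at hy; exact h01 (by rw [hx, hy]; ring)
        · left; exact hx
      · by_cases hx : x₁ = 0
        · right; intro hy; simp at hy; exact h01 (by rw [hx, hy]; ring)
        · left; exact hx
      · by_cases hx : x₂ = 0
        · right; intro hy; simp at hy; exact h02 (by rw [hx, hy]; ring)
        · left; exact hx)
    (by
      intro i j hij
      fin_cases i <;> fin_cases j <;>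
        simp only [Matrix.cons_val_zero, Matrix.cons_val_one, Matrix.head_cons,
          Matrix.cons_val_two, Matrix.tail_cons] <;>
        first
          | exact absurd rfl hij
          | exact h01
          | exact h02
          | exact h12
          | exact fun hh => h01 hh.symm
          | exact fun hh => h02 hh.symm
          | exact fun hh => h12 hh.symm)
    (by
      intro k hk
      rw [Fin.sum_univ_three]
      simpa using h k hk)
  exact ⟨key 0, key 1, key 2⟩

lemma pow_indep4 (n : ℕ) (hn : 3 ≤ n) (x₀ y₀ x₁ y₁ x₂ y₂ x₃ y₃ c₀ c₁ c₂ c₃ : ℂ)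
    (h01 : x₀ * y₁ ≠ x₁ * y₀) (h02 : x₀ * y₂ ≠ x₂ * y₀) (h03 : x₀ * y₃ ≠ x₃ * y₀)
    (h12 : x₁ * y₂ ≠ x₂ * y₁) (h13 : x₁ * y₃ ≠ x₃ * y₁) (h23 : x₂ * y₃ ≠ x₃ * y₂)
    (h : ∀ k ≤ n, c₀ * (x₀ ^ (n - k) * y₀ ^ k) + c₁ * (x₁ ^ (n - k) * y₁ ^ k)
      + c₂ * (x₂ ^ (n - k) * y₂ ^ k) + c₃ * (x₃ ^ (n - k) * y₃ ^ k) = 0) :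
    c₀ = 0 ∧ c₁ = 0 ∧ c₂ = 0 ∧ c₃ = 0 := by
  have key := pow_indep (m := 4) (n := n) (by omega) ![x₀, x₁, x₂, x₃] ![y₀, y₁, y₂, y₃]
    ![c₀, c₁, c₂, c₃]
    (by
      intro i
      fin_cases i <;>
        simp only [Matrix.cons_val_zero, Matrix.cons_val_one, Matrix.head_cons,
          Matrix.cons_val_two, Matrix.tail_cons, Matrix.cons_val_three]
      · by_cases hx : x₀ = 0
        · right; intro hy; simp at hy; exact h01 (by rw [hx, hy]; ring)
        · left; exact hx
      · by_cases hx : x₁ = 0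
        · right; intro hy; simp at hy; exact h01 (by rw [hx, hy]; ring)
        · left; exact hx
      · by_cases hx : x₂ = 0
        · right; intro hy; simp at hy; exact h02 (by rw [hx, hy]; ring)
        · left; exact hx
      · by_cases hx : x₃ = 0
        · right; intro hy; simp at hy; exact h03 (by rw [hx, hy]; ring)
        · left; exact hx)
    (by
      intro i j hij
      fin_cases i <;> fin_cases j <;>
        simp only [Matrix.cons_val_zero, Matrix.cons_val_one, Matrix.head_cons,
          Matrix.cons_val_two, Matrix.tail_cons, Matrix.cons_val_three] <;>
        first
          | exact absurd rfl hij
          | exact h01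
          | exact h02
          | exact h03
          | exact h12
          | exact h13
          | exact h23
          | exact fun hh => h01 hh.symm
          | exact fun hh => h02 hh.symm
          | exact fun hh => h03 hh.symm
          | exact fun hh => h12 hh.symm
          | exact fun hh => h13 hh.symm
          | exact fun hh => h23 hh.symm)
    (by
      intro k hk
      rw [Fin.sum_univ_four]
      simpa using h k hk)
  exact ⟨key 0, key 1, key 2, key 3⟩

lemma prop_of_pow (n : ℕ) (hn : 1 ≤ n) (a b p q c : ℂ) (hc : c ≠ 0)
    (h0 : a ^ n = c * p ^ n) (h1 : a ^ (n - 1) * b = c * (p ^ (n - 1) * q)) :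
    a * q = b * p := by
  by_cases ha : a = 0
  · have hp : p = 0 := by
      have h2 : c * p ^ n = 0 := by rw [← h0, ha, zero_pow (by omega)]
      exact pow_eq_zero_iff (by omega) |>.mp ((mul_eq_zero.mp h2).resolve_left hc)
    simp [ha, hp]
  · have hpow : a ^ (n - 1) ≠ 0 := pow_ne_zero _ ha
    have ea : a ^ n = a ^ (n - 1) * a := by
      rw [← pow_succ]; congr 1; omega
    have ep : p ^ n = p ^ (n - 1) * p := by
      rw [← pow_succ]; congr 1; omega
    apply mul_left_cancel₀ hpow
    calc a ^ (n - 1) * (a * q) = a ^ n * q := by rw [ea]; ring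
      _ = c * (p ^ (n - 1) * q) * p := by rw [h0, ep]; ring
      _ = a ^ (n - 1) * b * p := by rw [← h1]
      _ = a ^ (n - 1) * (b * p) := by ring

lemma orth_aux (x y z w u₀ u₁ : ℂ) (hp : x * u₁ = y * u₀) (hq : z * -u₀ = w * u₁)
    (h2 : u₀ ^ 2 + u₁ ^ 2 = 2) : x * z + y * w = 0 := by
  linear_combination ((z * u₁ - w * u₀) / 2) * hp + (-(x * u₀ + y * u₁) / 2) * hq +
    (-(x * z + y * w) / 2) * h2

lemma match4 (n : ℕ) (hn : 3 ≤ n) (a₀ b₀ a₁ b₁ p₀ p₁ q₀ q₁ c₀ c₁ : ℂ)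
    (hv : a₀ * b₁ ≠ a₁ * b₀) (hpq : p₀ * q₁ ≠ q₀ * p₁) (hc₀ : c₀ ≠ 0) (hc₁ : c₁ ≠ 0)
    (h : ∀ k ≤ n, a₀ ^ (n - k) * b₀ ^ k + a₁ ^ (n - k) * b₁ ^ k
      = c₀ * (p₀ ^ (n - k) * p₁ ^ k) + c₁ * (q₀ ^ (n - k) * q₁ ^ k)) :
    ((∀ k ≤ n, a₀ ^ (n - k) * b₀ ^ k = c₀ * (p₀ ^ (n - k) * p₁ ^ k)) ∧
      (∀ k ≤ n, a₁ ^ (n - k) * b₁ ^ k = c₁ * (q₀ ^ (n - k) * q₁ ^ k))) ∨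
    ((∀ k ≤ n, a₀ ^ (n - k) * b₀ ^ k = c₁ * (q₀ ^ (n - k) * q₁ ^ k)) ∧
      (∀ k ≤ n, a₁ ^ (n - k) * b₁ ^ k = c₀ * (p₀ ^ (n - k) * p₁ ^ k))) := by
  have hpnz : ¬(p₀ = 0 ∧ p₁ = 0) := fun ⟨h1, h2⟩ => hpq (by rw [h1, h2]; ring)
  have hqnz : ¬(q₀ = 0 ∧ q₁ = 0) := fun ⟨h1, h2⟩ => hpq (by rw [h1, h2]; ring)
  by_cases h0p : a₀ * p₁ = p₀ * b₀
  · obtain ⟨μ, hμ1, hμ2⟩ := colinear a₀ b₀ p₀ p₁ h0p hpnz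
    by_cases h1q : a₁ * q₁ = q₀ * b₁
    · obtain ⟨ν, hν1, hν2⟩ := colinear a₁ b₁ q₀ q₁ h1q hqnz
      have key : ∀ k ≤ n, (μ ^ n - c₀) * (p₀ ^ (n - k) * p₁ ^ k)
          + (ν ^ n - c₁) * (q₀ ^ (n - k) * q₁ ^ k) = 0 := by
        intro k hk
        have hh := h k hk
        rw [hμ1, hμ2, hν1, hν2, scale_pow n k hk, scale_pow n k hk] at hh
        linear_combination hh
      obtain ⟨d₀, d₁⟩ := pow_indep2 n (by omega) p₀ p₁ q₀ q₁ _ _ hpq key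
      left
      constructor <;> intro k hk
      · rw [hμ1, hμ2, scale_pow n k hk, show μ ^ n = c₀ by linear_combination d₀]
      · rw [hν1, hν2, scale_pow n k hk, show ν ^ n = c₁ by linear_combination d₁]
    · exfalso
      have h1p : ¬(a₁ * p₁ = p₀ * b₁) := by
        intro hcon
        obtain ⟨ν, hν1, hν2⟩ := colinear a₁ b₁ p₀ p₁ hcon hpnz
        exact hv (by rw [hμ1, hμ2, hν1, hν2]; ring)
      have key : ∀ k ≤ n, (μ ^ n - c₀) * (p₀ ^ (n - k) * p₁ ^ k)
          + 1 * (a₁ ^ (n - k) * b₁ ^ k) + (-c₁) * (q₀ ^ (n - k) * q₁ ^ k) = 0 := by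
        intro k hk
        have hh := h k hk
        rw [hμ1, hμ2, scale_pow n k hk] at hh
        linear_combination hh
      have := pow_indep3 n (by omega) p₀ p₁ a₁ b₁ q₀ q₁ _ _ _
        (fun hh => h1p hh.symm) hpq h1q key
      exact one_ne_zero this.2.1
  · by_cases h0q : a₀ * q₁ = q₀ * b₀
    · obtain ⟨μ, hμ1, hμ2⟩ := colinear a₀ b₀ q₀ q₁ h0q hqnz
      by_cases h1p : a₁ * p₁ = p₀ * b₁
      · obtain ⟨ν, hν1, hν2⟩ := colinear a₁ b₁ p₀ p₁ h1p hpnz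
        have key : ∀ k ≤ n, (ν ^ n - c₀) * (p₀ ^ (n - k) * p₁ ^ k)
            + (μ ^ n - c₁) * (q₀ ^ (n - k) * q₁ ^ k) = 0 := by
          intro k hk
          have hh := h k hk
          rw [hμ1, hμ2, hν1, hν2, scale_pow n k hk, scale_pow n k hk] at hh
          linear_combination hh
        obtain ⟨d₀, d₁⟩ := pow_indep2 n (by omega) p₀ p₁ q₀ q₁ _ _ hpq key
        right
        constructor <;> intro k hk
        · rw [hμ1, hμ2, scale_pow n k hk, show μ ^ n = c₁ by linear_combination d₁]
        · rw [hν1, hν2, scale_pow n k hk, show ν ^ n = c₀ by linear_combination d₀]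
      · exfalso
        have h1q : ¬(a₁ * q₁ = q₀ * b₁) := by
          intro hcon
          obtain ⟨ν, hν1, hν2⟩ := colinear a₁ b₁ q₀ q₁ hcon hqnz
          exact hv (by rw [hμ1, hμ2, hν1, hν2]; ring)
        have key : ∀ k ≤ n, 1 * (a₁ ^ (n - k) * b₁ ^ k)
            + (-c₀) * (p₀ ^ (n - k) * p₁ ^ k)
            + (μ ^ n - c₁) * (q₀ ^ (n - k) * q₁ ^ k) = 0 := by
          intro k hk
          have hh := h k hk
          rw [hμ1, hμ2, scale_pow n k hk] at hh
          linear_combination hh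
        have := pow_indep3 n (by omega) a₁ b₁ p₀ p₁ q₀ q₁ _ _ _
          h1p h1q hpq key
        exact one_ne_zero this.1
    · exfalso
      by_cases h1p : a₁ * p₁ = p₀ * b₁
      · obtain ⟨ν, hν1, hν2⟩ := colinear a₁ b₁ p₀ p₁ h1p hpnz
        have key : ∀ k ≤ n, 1 * (a₀ ^ (n - k) * b₀ ^ k)
            + (ν ^ n - c₀) * (p₀ ^ (n - k) * p₁ ^ k)
            + (-c₁) * (q₀ ^ (n - k) * q₁ ^ k) = 0 := by
          intro k hk
          have hh := h k hk
          rw [hν1, hν2, scale_pow n k hk] at hh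
          linear_combination hh
        have := pow_indep3 n (by omega) a₀ b₀ p₀ p₁ q₀ q₁ _ _ _
          h0p h0q hpq key
        exact one_ne_zero this.1
      · by_cases h1q : a₁ * q₁ = q₀ * b₁
        · obtain ⟨ν, hν1, hν2⟩ := colinear a₁ b₁ q₀ q₁ h1q hqnz
          have key : ∀ k ≤ n, 1 * (a₀ ^ (n - k) * b₀ ^ k)
              + (-c₀) * (p₀ ^ (n - k) * p₁ ^ k)
              + (ν ^ n - c₁) * (q₀ ^ (n - k) * q₁ ^ k) = 0 := by
            intro k hk
            have hh := h k hk
            rw [hν1, hν2, scale_pow n k hk] at hh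
            linear_combination hh
          have := pow_indep3 n (by omega) a₀ b₀ p₀ p₁ q₀ q₁ _ _ _
            h0p h0q hpq key
          exact one_ne_zero this.1
        · have key : ∀ k ≤ n, 1 * (a₀ ^ (n - k) * b₀ ^ k)
              + 1 * (a₁ ^ (n - k) * b₁ ^ k)
              + (-c₀) * (p₀ ^ (n - k) * p₁ ^ k)
              + (-c₁) * (q₀ ^ (n - k) * q₁ ^ k) = 0 := by
            intro k hk
            linear_combination h k hk
          have := pow_indep4 n hn a₀ b₀ a₁ b₁ p₀ p₁ q₀ q₁ _ _ _ _
            hv h0p h0q h1p h1q hpq key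
          exact one_ne_zero this.1

noncomputable def Hmat (u₀ u₁ : ℂ) : Matrix (Fin 2) (Fin 2) ℂ :=
  !![(u₀ + u₁) / 2, (u₀ - u₁) / 2; (u₁ - u₀) / 2, (u₁ + u₀) / 2]

lemma Hmat_orth {u₀ u₁ : ℂ} (h2 : u₀ ^ 2 + u₁ ^ 2 = 2) :
    (Hmat u₀ u₁).transpose * Hmat u₀ u₁ = 1 := by
  have ht : (Hmat u₀ u₁).transpose =
      !![(u₀ + u₁) / 2, (u₁ - u₀) / 2; (u₀ - u₁) / 2, (u₁ + u₀) / 2] := by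
    ext i j
    fin_cases i <;> fin_cases j <;> simp [Hmat]
  rw [ht, Hmat, Matrix.mul_fin_two, Matrix.one_fin_two]
  ext i j
  fin_cases i <;> fin_cases j <;> simp <;>
    first
      | linear_combination h2 / 2
      | ring1

lemma Hmat_mv1 (u₀ u₁ : ℂ) : (Hmat u₀ u₁).mulVec ![1, 1] 0 = u₀ := by
  simp [Hmat, Matrix.mulVec, dotProduct, Fin.sum_univ_two]
  ring

lemma Hmat_mv2 (u₀ u₁ : ℂ) : (Hmat u₀ u₁).mulVec ![1, 1] 1 = u₁ := by
  simp [Hmat, Matrix.mulVec, dotProduct, Fin.sum_univ_two]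
  ring

lemma Hmat_mv3 (u₀ u₁ : ℂ) : (Hmat u₀ u₁).mulVec ![1, -1] 0 = u₁ := by
  simp [Hmat, Matrix.mulVec, dotProduct, Fin.sum_univ_two]
  ring

lemma Hmat_mv4 (u₀ u₁ : ℂ) : (Hmat u₀ u₁).mulVec ![1, -1] 1 = -u₀ := by
  simp [Hmat, Matrix.mulVec, dotProduct, Fin.sum_univ_two]
  ring

lemma reverse_construct (n : ℕ) (a₀ b₀ a₁ b₁ μ s : ℂ) (f : ℕ → ℂ)
    (hμa : a₁ = μ * b₀) (hμb : b₁ = -(μ * a₀)) (hAμ : Aset n (μ ^ n))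
    (hs : s ≠ 0) (h2 : (s * a₀) ^ 2 + (s * b₀) ^ 2 = 2)
    (hf : ∀ k ≤ n, f k = a₀ ^ (n - k) * b₀ ^ k + a₁ ^ (n - k) * b₁ ^ k) :
    MemA1 n f := by
  obtain ⟨t', r', ht', hr', hzeq⟩ := hAμ
  refine ⟨Hmat (s * a₀) (s * b₀), (s ^ n)⁻¹, t', r', Hmat_orth h2,
    inv_ne_zero (pow_ne_zero _ hs), ht', hr', ?_⟩
  intro k hk
  rw [hf k hk, Hmat_mv1, Hmat_mv2, Hmat_mv3, Hmat_mv4, ← hzeq, hμa, hμb]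
  have E1 := scale_pow n k hk s a₀ b₀
  have E2 : (s * b₀) ^ (n - k) * (-(s * a₀)) ^ k = s ^ n * (b₀ ^ (n - k) * (-a₀) ^ k) := by
    rw [show -(s * a₀) = s * -a₀ from by ring]; exact scale_pow n k hk s b₀ (-a₀)
  have E3 : (μ * b₀) ^ (n - k) * (-(μ * a₀)) ^ k = μ ^ n * (b₀ ^ (n - k) * (-a₀) ^ k) := by
    rw [show -(μ * a₀) = μ * -a₀ from by ring]; exact scale_pow n k hk μ b₀ (-a₀)
  rw [E1, E2, E3]
  have hsn : s ^ n ≠ 0 := pow_ne_zero _ hs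
  field_simp

/-- **Characterization of `𝒜₁`.**
Let `f = v₀^{⊗n} + v₁^{⊗n}` with `v₀ = (a₀, b₀)`, `v₁ = (a₁, b₁)` linearly independent and
`n ≥ 3`. Then `f ∈ 𝒜₁` iff `a₀ a₁ + b₀ b₁ = 0` (i.e. `θ(f) = 0`) and there exist
`r ∈ {0,1,2,3}` and `t ∈ {0,1}` such that `a₁ⁿ = α^{tn+2r} b₀ⁿ ≠ 0` or
`b₁ⁿ = α^{tn+2r} a₀ⁿ ≠ 0`. -/
theorem stmt_14 (n : ℕ) (hn : 3 ≤ n) (a₀ b₀ a₁ b₁ : ℂ)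
    (hli : LinearIndependent ℂ ![(a₀, b₀), (a₁, b₁)]) (f : ℕ → ℂ)
    (hf : ∀ k ≤ n, f k = a₀ ^ (n - k) * b₀ ^ k + a₁ ^ (n - k) * b₁ ^ k) :
    MemA1 n f ↔
      a₀ * a₁ + b₀ * b₁ = 0 ∧
      ∃ r t : ℕ, r ≤ 3 ∧ t ≤ 1 ∧
        ((a₁ ^ n = alpha ^ (t * n + 2 * r) * b₀ ^ n ∧ b₀ ≠ 0) ∨
          (b₁ ^ n = alpha ^ (t * n + 2 * r) * a₀ ^ n ∧ a₀ ≠ 0)) := by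
  have hD : a₀ * b₁ - a₁ * b₀ ≠ 0 := by
    intro hD0
    have key := LinearIndependent.pair_iff.mp hli
    have hb := key b₁ (-b₀) (by
      simp only [Prod.smul_mk, smul_eq_mul, Prod.mk_add_mk, Prod.mk_eq_zero]
      constructor
      · linear_combination hD0
      · ring)
    have ha := key a₁ (-a₀) (by
      simp only [Prod.smul_mk, smul_eq_mul, Prod.mk_add_mk, Prod.mk_eq_zero]
      constructor
      · ring
      · linear_combination -hD0)
    have h1 := key 1 0 (by
      simp only [Prod.smul_mk, smul_eq_mul, Prod.mk_add_mk, Prod.mk_eq_zero]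
      have hb0 : b₀ = 0 := by linear_combination -hb.2
      have ha0 : a₀ = 0 := by linear_combination -ha.2
      constructor
      · rw [ha0]; ring
      · rw [hb0]; ring)
    exact one_ne_zero h1.1
  constructor
  · rintro ⟨H, c, t, r, hH, hc, ht, hr, heq⟩
    have e1 : H 0 0 * H 0 0 + H 1 0 * H 1 0 = 1 := by
      have h := congrFun (congrFun hH 0) 0
      simp [Matrix.mul_apply, Matrix.transpose_apply, Fin.sum_univ_two, Matrix.one_apply] at h
      linear_combination h
    have e2 : H 0 1 * H 0 1 + H 1 1 * H 1 1 = 1 := by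
      have h := congrFun (congrFun hH 1) 1
      simp [Matrix.mul_apply, Matrix.transpose_apply, Fin.sum_univ_two, Matrix.one_apply] at h
      linear_combination h
    have e3 : H 0 0 * H 0 1 + H 1 0 * H 1 1 = 0 := by
      have h := congrFun (congrFun hH 0) 1
      simp [Matrix.mul_apply, Matrix.transpose_apply, Fin.sum_univ_two, Matrix.one_apply] at h
      linear_combination h
    have m1 : H.mulVec ![1, 1] 0 = H 0 0 + H 0 1 := by
      simp [Matrix.mulVec, dotProduct, Fin.sum_univ_two]
    have m2 : H.mulVec ![1, 1] 1 = H 1 0 + H 1 1 := by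
      simp [Matrix.mulVec, dotProduct, Fin.sum_univ_two]
    have m3 : H.mulVec ![1, -1] 0 = H 0 0 - H 0 1 := by
      simp [Matrix.mulVec, dotProduct, Fin.sum_univ_two]
      ring
    have m4 : H.mulVec ![1, -1] 1 = H 1 0 - H 1 1 := by
      simp [Matrix.mulVec, dotProduct, Fin.sum_univ_two]
      ring
    obtain ⟨A, B, C, D', hA, hB, hC, hD'⟩ :
        ∃ A B C D', A = H 0 0 ∧ B = H 0 1 ∧ C = H 1 0 ∧ D' = H 1 1 :=
      ⟨_, _, _, _, rfl, rfl, rfl, rfl⟩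
    simp only [← hA, ← hB, ← hC, ← hD'] at e1 e2 e3 m1 m2 m3 m4
    obtain ⟨d, hd⟩ : ∃ x, x = A * D' - B * C := ⟨_, rfl⟩
    have h2 : (A + B) ^ 2 + (C + D') ^ 2 = 2 := by linear_combination e1 + e2 + 2 * e3
    have hd2 : d ^ 2 = 1 := by
      rw [hd]; linear_combination (B * B + D' * D') * e1 + e2 - (A * B + C * D') * e3
    have hw0 : A - B = d * (C + D') := by
      rw [hd]; linear_combination B * e1 - A * e2 + (B - A) * e3
    have hw1 : C - D' = -(d * (A + B)) := by
      rw [hd]; linear_combination D' * e1 - C * e2 + (D' - C) * e3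
    have hdne : d ≠ 0 := by
      intro h0; rw [h0] at hd2; norm_num at hd2
    have hκ : c * alpha ^ (t * n + 2 * r) * d ^ n ≠ 0 :=
      mul_ne_zero (mul_ne_zero hc (pow_ne_zero _ alpha_ne_zero)) (pow_ne_zero _ hdne)
    have master : ∀ k ≤ n, a₀ ^ (n - k) * b₀ ^ k + a₁ ^ (n - k) * b₁ ^ k =
        c * ((A + B) ^ (n - k) * (C + D') ^ k) +
          (c * alpha ^ (t * n + 2 * r) * d ^ n) * ((C + D') ^ (n - k) * (-(A + B)) ^ k) := by
      intro k hk
      have h1 := heq k hk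
      rw [hf k hk, m1, m2, m3, m4] at h1
      have ew : (A - B) ^ (n - k) * (C - D') ^ k =
          d ^ n * ((C + D') ^ (n - k) * (-(A + B)) ^ k) := by
        rw [hw0, hw1, show -(d * (A + B)) = d * -(A + B) from by ring]
        exact scale_pow n k hk d (C + D') (-(A + B))
      rw [ew] at h1
      linear_combination h1
    have hv' : a₀ * b₁ ≠ a₁ * b₀ := fun hh => hD (by linear_combination hh)
    have hpq' : (A + B) * (-(A + B)) ≠ (C + D') * (C + D') := by
      intro hh
      have h20 : (2 : ℂ) = 0 := by linear_combination -hh - h2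
      norm_num at h20
    have hAz : Aset n (alpha ^ (t * n + 2 * r) * d ^ n) := by
      have hd1 : d = 1 ∨ d = -1 := by
        have hfac : (d - 1) * (d + 1) = 0 := by linear_combination hd2
        rcases mul_eq_zero.mp hfac with h | h
        · left; linear_combination h
        · right; linear_combination h
      rcases hd1 with h | h
      · rw [h, one_pow, mul_one]; exact Aset_base n t r ht hr
      · rw [h]
        rcases Nat.even_or_odd n with he | ho
        · rw [he.neg_one_pow, mul_one]; exact Aset_base n t r ht hr
        · rw [ho.neg_one_pow, mul_neg_one]; exact Aset_neg (Aset_base n t r ht hr)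
    have hAz2 : Aset n (alpha ^ (t * n + 2 * r) * d ^ n * (-1) ^ n) := by
      rcases Nat.even_or_odd n with he | ho
      · rw [he.neg_one_pow, mul_one]; exact hAz
      · rw [ho.neg_one_pow, mul_neg_one]; exact Aset_neg hAz
    rcases match4 n hn a₀ b₀ a₁ b₁ (A + B) (C + D') (C + D') (-(A + B)) c
        (c * alpha ^ (t * n + 2 * r) * d ^ n) hv' hpq' hc hκ master with
      ⟨hL1, hL2⟩ | ⟨hR1, hR2⟩
    · have h00 : a₀ ^ n = c * (A + B) ^ n := by
        have h := hL1 0 (by omega)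
        simp only [Nat.sub_zero, pow_zero, mul_one, one_mul] at h
        linear_combination h
      have h01 : a₀ ^ (n - 1) * b₀ = c * ((A + B) ^ (n - 1) * (C + D')) := by
        have h := hL1 1 (by omega)
        simp only [pow_one] at h
        linear_combination h
      have h0n : b₀ ^ n = c * (C + D') ^ n := by
        have h := hL1 n le_rfl
        simp only [Nat.sub_self, pow_zero, mul_one, one_mul] at h
        linear_combination h
      have h10 : a₁ ^ n = (c * alpha ^ (t * n + 2 * r) * d ^ n) * (C + D') ^ n := by
        have h := hL2 0 (by omega)
        simp only [Nat.sub_zero, pow_zero, mul_one, one_mul] at h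
        linear_combination h
      have h11 : a₁ ^ (n - 1) * b₁ =
          (c * alpha ^ (t * n + 2 * r) * d ^ n) * ((C + D') ^ (n - 1) * (-(A + B))) := by
        have h := hL2 1 (by omega)
        simp only [pow_one] at h
        linear_combination h
      have h1n : b₁ ^ n = (c * alpha ^ (t * n + 2 * r) * d ^ n) * (-(A + B)) ^ n := by
        have h := hL2 n le_rfl
        simp only [Nat.sub_self, pow_zero, mul_one, one_mul] at h
        linear_combination h
      constructor
      · have hp := prop_of_pow n (by omega) a₀ b₀ (A + B) (C + D') c hc h00 h01
        have hq := prop_of_pow n (by omega) a₁ b₁ (C + D') (-(A + B))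
          (c * alpha ^ (t * n + 2 * r) * d ^ n) hκ h10 h11
        exact orth_aux a₀ b₀ a₁ b₁ (A + B) (C + D') hp hq h2
      · by_cases hu1 : C + D' = 0
        · have hu0 : A + B ≠ 0 := by
            intro hh; rw [hh, hu1] at h2; norm_num at h2
          have ha₀ : a₀ ≠ 0 := by
            intro hh
            rw [hh, zero_pow (by omega : n ≠ 0)] at h00
            exact mul_ne_zero hc (pow_ne_zero _ hu0) h00.symm
          obtain ⟨t', r', ht', hr', hzeq⟩ := hAz2
          refine ⟨r', t', hr', ht', Or.inr ⟨?_, ha₀⟩⟩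
          rw [← hzeq, h1n, neg_pow, h00]
          ring
        · have hb₀ : b₀ ≠ 0 := by
            intro hh
            rw [hh, zero_pow (by omega : n ≠ 0)] at h0n
            exact mul_ne_zero hc (pow_ne_zero _ hu1) h0n.symm
          obtain ⟨t', r', ht', hr', hzeq⟩ := hAz
          refine ⟨r', t', hr', ht', Or.inl ⟨?_, hb₀⟩⟩
          rw [← hzeq, h10, h0n]
          ring
    · have h00 : a₀ ^ n = (c * alpha ^ (t * n + 2 * r) * d ^ n) * (C + D') ^ n := by
        have h := hR1 0 (by omega)
        simp only [Nat.sub_zero, pow_zero, mul_one, one_mul] at h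
        linear_combination h
      have h01 : a₀ ^ (n - 1) * b₀ =
          (c * alpha ^ (t * n + 2 * r) * d ^ n) * ((C + D') ^ (n - 1) * (-(A + B))) := by
        have h := hR1 1 (by omega)
        simp only [pow_one] at h
        linear_combination h
      have h0n : b₀ ^ n = (c * alpha ^ (t * n + 2 * r) * d ^ n) * (-(A + B)) ^ n := by
        have h := hR1 n le_rfl
        simp only [Nat.sub_self, pow_zero, mul_one, one_mul] at h
        linear_combination h
      have h10 : a₁ ^ n = c * (A + B) ^ n := by
        have h := hR2 0 (by omega)
        simp only [Nat.sub_zero, pow_zero, mul_one, one_mul] at h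
        linear_combination h
      have h11 : a₁ ^ (n - 1) * b₁ = c * ((A + B) ^ (n - 1) * (C + D')) := by
        have h := hR2 1 (by omega)
        simp only [pow_one] at h
        linear_combination h
      have h1n : b₁ ^ n = c * (C + D') ^ n := by
        have h := hR2 n le_rfl
        simp only [Nat.sub_self, pow_zero, mul_one, one_mul] at h
        linear_combination h
      constructor
      · have hp := prop_of_pow n (by omega) a₁ b₁ (A + B) (C + D') c hc h10 h11
        have hq := prop_of_pow n (by omega) a₀ b₀ (C + D') (-(A + B))
          (c * alpha ^ (t * n + 2 * r) * d ^ n) hκ h00 h01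
        have := orth_aux a₁ b₁ a₀ b₀ (A + B) (C + D') hp hq h2
        linear_combination this
      · by_cases hu1 : C + D' = 0
        · have hu0 : A + B ≠ 0 := by
            intro hh; rw [hh, hu1] at h2; norm_num at h2
          have hb₀ : b₀ ≠ 0 := by
            intro hh
            rw [hh, zero_pow (by omega : n ≠ 0)] at h0n
            refine hκ ?_
            have hne : (-(A + B)) ^ n ≠ 0 := pow_ne_zero _ (neg_ne_zero.mpr hu0)
            exact (mul_eq_zero.mp h0n.symm).resolve_right hne
          obtain ⟨y, hAy, hy1⟩ := Aset_inv hAz2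
          obtain ⟨t', r', ht', hr', hzeq⟩ := hAy
          refine ⟨r', t', hr', ht', Or.inl ⟨?_, hb₀⟩⟩
          rw [← hzeq]
          have hb0n : b₀ ^ n = (alpha ^ (t * n + 2 * r) * d ^ n * (-1) ^ n) * a₁ ^ n := by
            rw [h0n, neg_pow, h10]; ring
          calc a₁ ^ n = (y * (alpha ^ (t * n + 2 * r) * d ^ n * (-1) ^ n)) * a₁ ^ n := by
                rw [hy1, one_mul]
            _ = y * b₀ ^ n := by rw [hb0n]; ring
        · have ha₀ : a₀ ≠ 0 := by
            intro hh
            rw [hh, zero_pow (by omega : n ≠ 0)] at h00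
            exact hκ ((mul_eq_zero.mp h00.symm).resolve_right (pow_ne_zero _ hu1))
          obtain ⟨y, hAy, hy1⟩ := Aset_inv hAz
          obtain ⟨t', r', ht', hr', hzeq⟩ := hAy
          refine ⟨r', t', hr', ht', Or.inr ⟨?_, ha₀⟩⟩
          rw [← hzeq]
          have ha0n : a₀ ^ n = (alpha ^ (t * n + 2 * r) * d ^ n) * b₁ ^ n := by
            rw [h00, h1n]; ring
          calc b₁ ^ n = (y * (alpha ^ (t * n + 2 * r) * d ^ n)) * b₁ ^ n := by
                rw [hy1, one_mul]
            _ = y * a₀ ^ n := by rw [ha0n]; ring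
  · rintro ⟨horth, r, t, hr, ht, hcase⟩
    have hQ : a₀ ^ 2 + b₀ ^ 2 ≠ 0 := by
      intro h0
      have hb : b₀ = 0 := by
        have hmul : b₀ * (a₀ * b₁ - a₁ * b₀) = 0 := by
          linear_combination a₀ * horth - a₁ * h0
        exact (mul_eq_zero.mp hmul).resolve_right hD
      have ha : a₀ = 0 := by
        have h1 : a₀ ^ 2 = 0 := by rw [hb] at h0; linear_combination h0
        exact pow_eq_zero_iff (by omega : 2 ≠ 0) |>.mp h1
      exact hD (by rw [ha, hb]; ring)
    obtain ⟨s, hs2⟩ := IsAlgClosed.exists_pow_nat_eq (k := ℂ) (2 / (a₀ ^ 2 + b₀ ^ 2))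
      (two_pos : 0 < 2)
    have hs : s ≠ 0 := by
      intro h0
      have h' : (2 : ℂ) / (a₀ ^ 2 + b₀ ^ 2) = 0 := by
        rw [← hs2, h0, zero_pow (two_ne_zero)]
      rcases div_eq_zero_iff.mp h' with h'' | h''
      · norm_num at h''
      · exact hQ h''
    have h2 : (s * a₀) ^ 2 + (s * b₀) ^ 2 = 2 := by
      have hq : s ^ 2 * (a₀ ^ 2 + b₀ ^ 2) = 2 := by
        rw [hs2]; field_simp
      linear_combination hq
    rcases hcase with ⟨hab, hb₀⟩ | ⟨hab, ha₀⟩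
    · have hμa : a₁ = a₁ / b₀ * b₀ := by field_simp
      have hμb : b₁ = -(a₁ / b₀ * a₀) := by
        field_simp
        linear_combination horth
      have hμn : (a₁ / b₀) ^ n = alpha ^ (t * n + 2 * r) := by
        have h1 : (a₁ / b₀) ^ n * b₀ ^ n = alpha ^ (t * n + 2 * r) * b₀ ^ n := by
          rw [← mul_pow, ← hμa, hab]
        exact mul_right_cancel₀ (pow_ne_zero _ hb₀) h1
      exact reverse_construct n a₀ b₀ a₁ b₁ (a₁ / b₀) s f hμa hμb
        ⟨t, r, ht, hr, hμn⟩ hs h2 hf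
    · have hμb : b₁ = -(-(b₁ / a₀) * a₀) := by field_simp
      have hμa : a₁ = -(b₁ / a₀) * b₀ := by
        field_simp
        linear_combination horth
      have hμn : (-(-(b₁ / a₀))) ^ n = alpha ^ (t * n + 2 * r) := by
        have h1 : (-(-(b₁ / a₀))) ^ n * a₀ ^ n = alpha ^ (t * n + 2 * r) * a₀ ^ n := by
          rw [← mul_pow, show -(-(b₁ / a₀)) * a₀ = -(-(b₁ / a₀) * a₀) from by ring, ← hμb, hab]
        exact mul_right_cancel₀ (pow_ne_zero _ ha₀) h1
      have hAμ : Aset n ((-(b₁ / a₀)) ^ n) := by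
        have heq2 : (-(b₁ / a₀)) ^ n = (-1) ^ n * (-(-(b₁ / a₀))) ^ n := by
          rw [← mul_pow]; norm_num
        rw [heq2, hμn]
        rcases Nat.even_or_odd n with he | ho
        · rw [he.neg_one_pow, one_mul]; exact Aset_base n t r ht hr
        · rw [ho.neg_one_pow, neg_one_mul]; exact Aset_neg (Aset_base n t r ht hr)
      exact reverse_construct n a₀ b₀ a₁ b₁ (-(b₁ / a₀)) s f hμa hμb hAμ hs h2 hf
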